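/- Suppose E[v(θ)/θ] = ∫_{θ̲}^{θ̄} v(θ)g(θ)/θ dθ ≥ 0 where v is weakly increasing with zero-crossing θ̃ ∈ (θ̲, θ̄), g > 0 is a density on [θ̲, θ̄], and 0 < θ̲. Then for any θ̂ ∈ (θ̲, θ̄) with ∫_{θ̲}^{θ̂} v g dθ < 0, it holds that (1/θ̂)·∫_{θ̲}^{θ̂} v(θ)g(θ) dθ + ∫_{θ̂}^{θ̄} v(θ)g(θ)/θ dθ > 0. -/
import Mathlib

open MeasureTheory Set Filter intervalIntegral

/-- Extreme optimism: if `∫ v g/θ ≥ 0`, then for any `θ̂` with `∫_{θ̲}^{θ̂} vg < 0`,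
`(1/θ̂)·∫_{θ̲}^{θ̂} v g + ∫_{θ̂}^{θ̄} v g/θ > 0`. -/
theorem stmt5 (θlo θhi θtilde : ℝ) (g v : ℝ → ℝ)
    (h0 : 0 < θlo) (hlh : θlo < θhi)
    (hgc : ContinuousOn g (Icc θlo θhi))
    (hgpos : ∀ θ ∈ Icc θlo θhi, 0 < g θ)
    (hgint : (∫ θ in θlo..θhi, g θ) = 1)
    (hvc : ContinuousOn v (Icc θlo θhi))
    (hvmono : MonotoneOn v (Icc θlo θhi))
    (htilde : θtilde ∈ Ioo θlo θhi)
    (hneg : ∀ θ ∈ Icc θlo θhi, θ < θtilde → v θ < 0)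
    (hnonneg : ∀ θ ∈ Icc θlo θhi, θtilde ≤ θ → 0 ≤ v θ)
    (hEvθ : 0 ≤ ∫ θ in θlo..θhi, v θ * g θ / θ)
    (θhat : ℝ) (hθhat : θhat ∈ Ioo θlo θhi)
    (hden : (∫ θ in θlo..θhat, v θ * g θ) < 0) :
    0 < (1 / θhat) * (∫ θ in θlo..θhat, v θ * g θ) +
      (∫ θ in θhat..θhi, v θ * g θ / θ) := by
  obtain ⟨hlt1, hlt2⟩ := hθhat
  obtain ⟨ht1, ht2⟩ := htilde
  have hsub1 : Icc θlo θhat ⊆ Icc θlo θhi := Icc_subset_Icc le_rfl hlt2.le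
  have hsub2 : Icc θhat θhi ⊆ Icc θlo θhi := Icc_subset_Icc hlt1.le le_rfl
  have hθne : ∀ θ ∈ Icc θlo θhi, θ ≠ 0 := fun θ hθ => (lt_of_lt_of_le h0 hθ.1).ne'
  have hf1 : ContinuousOn (fun θ => v θ * g θ) (Icc θlo θhi) := hvc.mul hgc
  have hf2 : ContinuousOn (fun θ => v θ * g θ / θ) (Icc θlo θhi) :=
    hf1.div continuousOn_id hθne
  have hf3 : ContinuousOn (fun θ => v θ * g θ * (1/θ - 1/θhat)) (Icc θlo θhi) :=
    hf1.mul ((continuousOn_const.div continuousOn_id hθne).sub continuousOn_const)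
  -- integrabilities
  have hi1 : IntervalIntegrable (fun θ => v θ * g θ) volume θlo θhat :=
    (hf1.mono hsub1).intervalIntegrable_of_Icc hlt1.le
  have hi2a : IntervalIntegrable (fun θ => v θ * g θ / θ) volume θlo θhat :=
    (hf2.mono hsub1).intervalIntegrable_of_Icc hlt1.le
  have hi2b : IntervalIntegrable (fun θ => v θ * g θ / θ) volume θhat θhi :=
    (hf2.mono hsub2).intervalIntegrable_of_Icc hlt2.le
  have hi3 : IntervalIntegrable (fun θ => v θ * g θ * (1/θ - 1/θhat)) volume θlo θhat :=
    (hf3.mono hsub1).intervalIntegrable_of_Icc hlt1.le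
  -- key: ∫_{lo}^{hat} v g (1/θ - 1/θhat) < 0
  have hkey : (∫ θ in θlo..θhat, v θ * g θ * (1/θ - 1/θhat)) < 0 := by
    rcases le_or_gt θhat θtilde with hc | hc
    · -- v < 0 on [lo, hat)
      have h := intervalIntegral.integral_lt_integral_of_continuousOn_of_le_of_exists_lt
        (f := fun θ => v θ * g θ * (1/θ - 1/θhat)) (g := fun _ => (0:ℝ))
        hlt1 (hf3.mono hsub1) continuousOn_const ?_ ?_
      · simpa using h
      · intro x hx
        have hx' : x ∈ Icc θlo θhi := hsub1 ⟨hx.1.le, hx.2⟩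
        have hxpos : 0 < x := lt_of_lt_of_le h0 hx'.1
        have hg : 0 < g x := hgpos x hx'
        rcases lt_or_ge x θtilde with hxc | hxc
        · have hv : v x < 0 := hneg x hx' hxc
          have hh : 0 ≤ 1/x - 1/θhat := by
            have : 1/θhat ≤ 1/x := one_div_le_one_div_of_le hxpos hx.2
            linarith
          have : 0 ≤ g x * (1/x - 1/θhat) := mul_nonneg hg.le hh
          nlinarith
        · have hxeq : x = θhat := le_antisymm hx.2 (hc.trans hxc)
          show v x * g x * (1 / x - 1 / θhat) ≤ (0:ℝ)
          rw [hxeq]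
          simp
      · refine ⟨θlo, ⟨le_rfl, hlt1.le⟩, ?_⟩
        have hlo' : θlo ∈ Icc θlo θhi := ⟨le_rfl, hlh.le⟩
        have hv : v θlo < 0 := hneg θlo hlo' ht1
        have hg : 0 < g θlo := hgpos θlo hlo'
        have hh : 0 < 1/θlo - 1/θhat := by
          have : 1/θhat < 1/θlo := one_div_lt_one_div_of_lt h0 hlt1
          linarith
        have : 0 < g θlo * (1/θlo - 1/θhat) := mul_pos hg hh
        nlinarith
    · -- θtilde < θhat: compare with constant weight 1/θtilde - 1/θhat
      have htpos : 0 < θtilde := h0.trans ht1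
      have hcpos : 0 < 1/θtilde - 1/θhat := by
        have : 1/θhat < 1/θtilde := one_div_lt_one_div_of_lt htpos hc
        linarith
      have hiR : IntervalIntegrable (fun θ => v θ * g θ * (1/θtilde - 1/θhat)) volume θlo θhat :=
        hi1.mul_const _
      have hmono : (∫ θ in θlo..θhat, v θ * g θ * (1/θ - 1/θhat))
          ≤ ∫ θ in θlo..θhat, v θ * g θ * (1/θtilde - 1/θhat) := by
        refine intervalIntegral.integral_mono_on hlt1.le hi3 hiR ?_
        intro x hx
        have hx' : x ∈ Icc θlo θhi := hsub1 hx
        have hxpos : 0 < x := lt_of_lt_of_le h0 hx'.1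
        have hg : 0 < g x := hgpos x hx'
        rcases lt_or_ge x θtilde with hxc | hxc
        · have hv : v x < 0 := hneg x hx' hxc
          have h1 : 1/θtilde ≤ 1/x := one_div_le_one_div_of_le hxpos hxc.le
          have : 0 ≤ g x * (1/x - 1/θtilde) := mul_nonneg hg.le (by linarith)
          nlinarith
        · have hv : 0 ≤ v x := hnonneg x hx' hxc
          have h1 : 1/x ≤ 1/θtilde := one_div_le_one_div_of_le htpos hxc
          have : 0 ≤ v x * g x := mul_nonneg hv hg.le
          nlinarith
      have heq : (∫ θ in θlo..θhat, v θ * g θ * (1/θtilde - 1/θhat))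
          = (1/θtilde - 1/θhat) * ∫ θ in θlo..θhat, v θ * g θ := by
        rw [← intervalIntegral.integral_const_mul]
        congr 1
        funext θ; ring
      rw [heq] at hmono
      nlinarith
  -- splitting and rearranging
  have hsplit : (∫ θ in θlo..θhat, v θ * g θ / θ) + (∫ θ in θhat..θhi, v θ * g θ / θ)
      = ∫ θ in θlo..θhi, v θ * g θ / θ :=
    intervalIntegral.integral_add_adjacent_intervals hi2a hi2b
  have hdiff : (∫ θ in θlo..θhat, v θ * g θ * (1/θ - 1/θhat))
      = (∫ θ in θlo..θhat, v θ * g θ / θ) - (1/θhat) * (∫ θ in θlo..θhat, v θ * g θ) := by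
    rw [← intervalIntegral.integral_const_mul, ← intervalIntegral.integral_sub hi2a (hi1.const_mul _)]
    congr 1
    funext θ; ring
  rw [hdiff] at hkey
  linarith
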